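/- arXiv:1706.01889 — 3 statements merged into one kernel-verified Lean document; each statement's English description precedes it below -/
import Mathlib

section
/- For the differential operators e = (t1+t2-t3)∂1 + (t1-t2-t3)∂3, f = (t1+t2-t3)∂2 + (t2-t1-t3)∂3, h = -2t1∂1 + 2t2∂2 - 2(t1-t2)∂3 acting on polynomials in t1,t2,t3, the commutation relations [e,f]=h, [h,e]=2e, [h,f]=-2f hold, i.e. they form an sl(2) triple. -/
open MvPolynomial

noncomputable section

lemma pderiv_two (i : Fin 3) : pderiv i (2 : MvPolynomial (Fin 3) ℚ) = 0 := by
  rw [(by norm_num : (2 : MvPolynomial (Fin 3) ℚ) = 1 + 1)]; simp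

lemma pderiv_comm' {i j : Fin 3} (P : MvPolynomial (Fin 3) ℚ) :
    pderiv i (pderiv j P) = pderiv j (pderiv i P) := by
  induction P using MvPolynomial.induction_on with
  | C a => simp
  | add p q hp hq => simp [hp, hq]
  | mul_X p n ih =>
    by_cases hik : i = n <;> by_cases hjk : j = n
    · subst hik; subst hjk; ring
    · subst hik
      simp only [pderiv_mul, ih, pderiv_X_self, pderiv_X_of_ne (Ne.symm hjk),
        map_add, map_mul, map_one, pderiv_one, mul_zero, mul_one, add_zero, map_zero]
    · subst hjk
      simp only [pderiv_mul, ih, pderiv_X_self, pderiv_X_of_ne (Ne.symm hik),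
        map_add, map_mul, map_one, pderiv_one, mul_zero, mul_one, add_zero, map_zero]
    · simp only [pderiv_mul, ih, pderiv_X_of_ne (Ne.symm hik), pderiv_X_of_ne (Ne.symm hjk),
        map_add, map_mul, mul_zero, add_zero, map_zero]

/-- `e = (t1+t2-t3)∂1 + (t1-t2-t3)∂3`. -/
def opE (P : MvPolynomial (Fin 3) ℚ) : MvPolynomial (Fin 3) ℚ :=
  (X 0 + X 1 - X 2) * pderiv 0 P + (X 0 - X 1 - X 2) * pderiv 2 P

/-- `f = (t1+t2-t3)∂2 + (t2-t1-t3)∂3`. -/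
def opF (P : MvPolynomial (Fin 3) ℚ) : MvPolynomial (Fin 3) ℚ :=
  (X 0 + X 1 - X 2) * pderiv 1 P + (X 1 - X 0 - X 2) * pderiv 2 P

/-- `h = -2t1∂1 + 2t2∂2 - 2(t1-t2)∂3`. -/
def opH (P : MvPolynomial (Fin 3) ℚ) : MvPolynomial (Fin 3) ℚ :=
  (-2) * X 0 * pderiv 0 P + 2 * X 1 * pderiv 1 P + (-2) * (X 0 - X 1) * pderiv 2 P

/-- The operators `e`, `f`, `h` form an `sl(2)` triple:
`[e,f] = h`, `[h,e] = 2e`, `[h,f] = -2f`. -/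
theorem stmt_2 :
    (∀ P : MvPolynomial (Fin 3) ℚ, opE (opF P) - opF (opE P) = opH P) ∧
    (∀ P : MvPolynomial (Fin 3) ℚ, opH (opE P) - opE (opH P) = 2 * opE P) ∧
    (∀ P : MvPolynomial (Fin 3) ℚ, opH (opF P) - opF (opH P) = -2 * opF P) := by
  refine ⟨fun P => ?_, fun P => ?_, fun P => ?_⟩ <;>
  · simp only [opE, opF, opH, map_add, map_sub, map_mul, pderiv_mul,
      pderiv_X_self, pderiv_X_of_ne (by decide : (0:Fin 3) ≠ 1),
      pderiv_X_of_ne (by decide : (0:Fin 3) ≠ 2),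
      pderiv_X_of_ne (by decide : (1:Fin 3) ≠ 0),
      pderiv_X_of_ne (by decide : (1:Fin 3) ≠ 2),
      pderiv_X_of_ne (by decide : (2:Fin 3) ≠ 0),
      pderiv_X_of_ne (by decide : (2:Fin 3) ≠ 1),
      map_neg, pderiv_two, pderiv_comm' (i := 0) (j := 1), pderiv_comm' (i := 0) (j := 2),
      pderiv_comm' (i := 1) (j := 2)]
    ring

end
end

section
/- With e, f, h the sl(2) triple e = (t1+t2-t3)∂1 + (t1-t2-t3)∂3, f = (t1+t2-t3)∂2 + (t2-t1-t3)∂3, h = -2t1∂1 + 2t2∂2 - 2(t1-t2)∂3, the quadratic Casimir operator (1/2)ef + (1/2)fe + (1/4)h^2 equals D^2 + D + (t1^2+t2^2+t3^2-2t1t2-2t2t3-2t3t1)(∂1∂2+∂2∂3+∂3∂1), where D = t1∂1 + t2∂2 + t3∂3. -/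
open MvPolynomial

noncomputable section

/-- The Euler operator `D = t1∂1 + t2∂2 + t3∂3`. -/
def opD (P : MvPolynomial (Fin 3) ℚ) : MvPolynomial (Fin 3) ℚ :=
  X 0 * pderiv 0 P + X 1 * pderiv 1 P + X 2 * pderiv 2 P

lemma my_pderiv_comm {σ R : Type*} [CommSemiring R] [DecidableEq σ] (i j : σ) (P : MvPolynomial σ R) :
    pderiv i (pderiv j P) = pderiv j (pderiv i P) := by
  induction P using MvPolynomial.induction_on with
  | C a => simp
  | add p q hp hq => simp [hp, hq]
  | mul_X p n hp => simp [pderiv_mul, hp, Pi.single_apply, apply_ite (pderiv i), apply_ite (pderiv j)]; ring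

set_option synthInstance.maxHeartbeats 1000000 in
set_option maxHeartbeats 2000000 in
/-- The quadratic Casimir `(1/2)ef + (1/2)fe + (1/4)h²` equals
`D² + D + (t1²+t2²+t3²-2t1t2-2t2t3-2t3t1)(∂1∂2+∂2∂3+∂3∂1)`. -/
theorem stmt_3 (P : MvPolynomial (Fin 3) ℚ) :
    (1 / 2 : ℚ) • opE (opF P) + (1 / 2 : ℚ) • opF (opE P) + (1 / 4 : ℚ) • opH (opH P)
      = opD (opD P) + opD P +
        (X 0 ^ 2 + X 1 ^ 2 + X 2 ^ 2 - 2 * X 0 * X 1 - 2 * X 1 * X 2 - 2 * X 2 * X 0) *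
          (pderiv 0 (pderiv 1 P) + pderiv 1 (pderiv 2 P) + pderiv 2 (pderiv 0 P)) := by
  have c01 := my_pderiv_comm (0 : Fin 3) 1 P
  have c02 := my_pderiv_comm (0 : Fin 3) 2 P
  have c12 := my_pderiv_comm (1 : Fin 3) 2 P
  have h2 : ∀ i : Fin 3, pderiv i (2 : MvPolynomial (Fin 3) ℚ) = 0 := fun i => by
    rw [show (2 : MvPolynomial (Fin 3) ℚ) = C 2 from (map_ofNat C 2).symm]; exact pderiv_C
  refine smul_right_injective (MvPolynomial (Fin 3) ℚ) (show (4 : ℚ) ≠ 0 by norm_num) ?_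
  simp only [smul_add, smul_smul]
  norm_num
  simp only [opE, opF, opH, opD, map_add, map_sub, map_neg, pderiv_mul,
    pderiv_X_self,
    pderiv_X_of_ne (show (1 : Fin 3) ≠ 0 by decide),
    pderiv_X_of_ne (show (2 : Fin 3) ≠ 0 by decide),
    pderiv_X_of_ne (show (0 : Fin 3) ≠ 1 by decide),
    pderiv_X_of_ne (show (2 : Fin 3) ≠ 1 by decide),
    pderiv_X_of_ne (show (0 : Fin 3) ≠ 2 by decide),
    pderiv_X_of_ne (show (1 : Fin 3) ≠ 2 by decide),
    h2, smul_eq_C_mul, map_ofNat, c01, c02, c12, mul_zero, zero_mul, add_zero, zero_add,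
    mul_one, neg_zero, sub_zero, zero_sub, neg_neg]
  ring

end
end

section
/- For every non-negative integer k, the number of S4-invariants in the k-th symmetric power of the 6-dimensional permutation-type representation of S4 on the edges of the tetrahedron equals the coefficient of q^k in (1 - q + q^2 + q^4 + q^6 - q^7 + q^8) / ((1-q)^6 (1+q)^2 (1+q^2) (1+q+q^2)^2); in particular these numbers for k = 0,...,7 are 1, 1, 3, 6, 11, 18, 32, 48. -/
open PowerSeries

noncomputable section

/-- Edges of the tetrahedron on vertex set `Fin 4`: off-diagonal elements of
`Sym2 (Fin 4)` (unordered pairs of distinct vertices); there are six of them. -/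
abbrev Edge := {e : Sym2 (Fin 4) // ¬ e.IsDiag}

/-- The 6-dimensional permutation-type representation of `S4` on the edges of the
tetrahedron, as a permutation matrix. -/
def edgeMat (g : Equiv.Perm (Fin 4)) : Matrix Edge Edge ℚ :=
  Matrix.of fun i j => if i.1 = Sym2.map g j.1 then 1 else 0

/-- The Molien factor `1/det(1 - q·ρ(g))` as a power series in `q`. -/
def molienTerm (g : Equiv.Perm (Fin 4)) : PowerSeries ℚ :=
  (Matrix.det (1 - (PowerSeries.X : PowerSeries ℚ) • (edgeMat g).map PowerSeries.C))⁻¹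

/-- The rational function `(1 - q + q² + q⁴ + q⁶ - q⁷ + q⁸) /
((1-q)⁶ (1+q)² (1+q²) (1+q+q²)²)` as a power series. -/
def f18 : PowerSeries ℚ :=
  (1 - PowerSeries.X + PowerSeries.X ^ 2 + PowerSeries.X ^ 4 + PowerSeries.X ^ 6
      - PowerSeries.X ^ 7 + PowerSeries.X ^ 8) *
    ((1 - PowerSeries.X) ^ 6 * (1 + PowerSeries.X) ^ 2 * (1 + PowerSeries.X ^ 2) *
        (1 + PowerSeries.X + PowerSeries.X ^ 2) ^ 2)⁻¹

open Equiv

/-- An enumeration of the six edges. -/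
def EE : Fin 6 → Edge := ![⟨s(0,1), by decide⟩, ⟨s(0,2), by decide⟩, ⟨s(0,3), by decide⟩,
  ⟨s(1,2), by decide⟩, ⟨s(1,3), by decide⟩, ⟨s(2,3), by decide⟩]

/-- The corresponding equivalence `Fin 6 ≃ Edge`. -/
def eE : Fin 6 ≃ Edge := Equiv.ofBijective EE (by decide)

lemma det_edge (g : Equiv.Perm (Fin 4)) (A : Matrix (Fin 6) (Fin 6) ℚ)
    (h : (edgeMat g).submatrix EE EE = A) :
    Matrix.det (1 - (X : ℚ⟦X⟧) • (edgeMat g).map (C)) =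
      Matrix.det (1 - (X : ℚ⟦X⟧) • A.map (C)) := by
  have hinj : Function.Injective EE := by decide
  rw [← Matrix.det_submatrix_equiv_self eE]
  congr 1
  subst h
  refine Matrix.ext fun i j => ?_
  show (1 - (X : ℚ⟦X⟧) • (edgeMat g).map (C)) (EE i) (EE j) = _
  simp [Matrix.sub_apply, Matrix.smul_apply, Matrix.map_apply, Matrix.submatrix_apply,
    Matrix.one_apply, hinj.eq_iff]

lemma cons_val_five {α : Type*} {m : ℕ} (x : α) (u : Fin (m+5) → α) :
    Matrix.vecCons x u 5 = Matrix.vecHead (Matrix.vecTail (Matrix.vecTail (Matrix.vecTail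
      (Matrix.vecTail u)))) := rfl

lemma edgeMat_one : edgeMat 1 = 1 := by decide

lemma edgeMat_mul (g h : Equiv.Perm (Fin 4)) :
    edgeMat (g * h) = edgeMat g * edgeMat h := by
  ext i j
  rw [Matrix.mul_apply]
  have hd : ¬ (Sym2.map h j.1).IsDiag := by
    rw [Sym2.isDiag_map h.injective]; exact j.2
  rw [Finset.sum_eq_single (⟨Sym2.map (⇑h) j.1, hd⟩ : Edge)]
  · simp [edgeMat, Sym2.map_map, Function.comp]
  · intro b _ hb
    have : ¬ b.1 = Sym2.map (⇑h) j.1 := fun hc => hb (Subtype.ext hc)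
    simp [edgeMat, this]
  · simp

set_option maxHeartbeats 2000000 in
lemma molienTerm_conj (h g : Equiv.Perm (Fin 4)) :
    molienTerm (h * g * h⁻¹) = molienTerm g := by
  unfold molienTerm
  congr 1
  have e1 : edgeMat (h * g * h⁻¹) = edgeMat h * edgeMat g * edgeMat h⁻¹ := by
    rw [edgeMat_mul, edgeMat_mul]
  have e2 : edgeMat h * edgeMat h⁻¹ = 1 := by
    rw [← edgeMat_mul, mul_inv_cancel, edgeMat_one]
  have e3 : edgeMat h⁻¹ * edgeMat h = 1 := by
    rw [← edgeMat_mul, inv_mul_cancel, edgeMat_one]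
  set F := (PowerSeries.C : ℚ →+* ℚ⟦X⟧)
  have key : (1 : Matrix Edge Edge ℚ⟦X⟧) - (X : ℚ⟦X⟧) • (edgeMat (h * g * h⁻¹)).map F =
      (edgeMat h).map F * ((1 : Matrix Edge Edge ℚ⟦X⟧) - (X : ℚ⟦X⟧) • (edgeMat g).map F)
        * (edgeMat h⁻¹).map F := by
    rw [e1]
    rw [Matrix.mul_sub, Matrix.mul_one, Matrix.sub_mul, ← Matrix.map_mul, e2,
      Matrix.map_one F (map_zero F) (map_one F), Matrix.mul_smul, Matrix.smul_mul,
      ← Matrix.map_mul, ← Matrix.map_mul]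
  rw [key, Matrix.det_mul, Matrix.det_mul]
  have : Matrix.det ((edgeMat h).map F) * Matrix.det ((edgeMat h⁻¹).map F) = 1 := by
    rw [← Matrix.det_mul, ← Matrix.map_mul, e2, Matrix.map_one F (map_zero F) (map_one F),
      Matrix.det_one]
  rw [mul_right_comm, this, one_mul]

set_option maxHeartbeats 4000000 in
set_option maxRecDepth 40000 in
lemma det_r1 : Matrix.det (1 - (X : ℚ⟦X⟧) • (edgeMat (1)).map (C)) = (1 - X)^6 := by
  rw [det_edge _ !![1,0,0,0,0,0; 0,1,0,0,0,0; 0,0,1,0,0,0; 0,0,0,1,0,0; 0,0,0,0,1,0; 0,0,0,0,0,1] (by decide)]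
  have h : (1 - (X : ℚ⟦X⟧) • (!![1,0,0,0,0,0; 0,1,0,0,0,0; 0,0,1,0,0,0; 0,0,0,1,0,0; 0,0,0,0,1,0; 0,0,0,0,0,1] : Matrix (Fin 6) (Fin 6) ℚ).map (C)) =
      !![1-X,0,0,0,0,0; 0,1-X,0,0,0,0; 0,0,1-X,0,0,0; 0,0,0,1-X,0,0; 0,0,0,0,1-X,0; 0,0,0,0,0,1-X] := by
    refine Matrix.ext fun i j => ?_
    fin_cases i <;> fin_cases j <;>
      simp [Matrix.one_apply, Matrix.vecHead, Matrix.vecTail, cons_val_five]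
  rw [h]
  simp [Matrix.det_succ_row_zero, Fin.sum_univ_succ, Fin.succAbove,
    Fin.castSucc, Fin.castAdd, Fin.castLE]
  ring

lemma molien_r1 : molienTerm (1) = (((1 - X)^6 : ℚ⟦X⟧))⁻¹ := by
  unfold molienTerm
  rw [det_r1]

set_option maxHeartbeats 4000000 in
set_option maxRecDepth 40000 in
lemma det_rt : Matrix.det (1 - (X : ℚ⟦X⟧) • (edgeMat (swap 0 1)).map (C)) = (1 - X)^2 * (1 - X^2)^2 := by
  rw [det_edge _ !![1,0,0,0,0,0; 0,0,0,1,0,0; 0,0,0,0,1,0; 0,1,0,0,0,0; 0,0,1,0,0,0; 0,0,0,0,0,1] (by decide)]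
  have h : (1 - (X : ℚ⟦X⟧) • (!![1,0,0,0,0,0; 0,0,0,1,0,0; 0,0,0,0,1,0; 0,1,0,0,0,0; 0,0,1,0,0,0; 0,0,0,0,0,1] : Matrix (Fin 6) (Fin 6) ℚ).map (C)) =
      !![1-X,0,0,0,0,0; 0,1,0,-X,0,0; 0,0,1,0,-X,0; 0,-X,0,1,0,0; 0,0,-X,0,1,0; 0,0,0,0,0,1-X] := by
    refine Matrix.ext fun i j => ?_
    fin_cases i <;> fin_cases j <;>
      simp [Matrix.one_apply, Matrix.vecHead, Matrix.vecTail, cons_val_five]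
  rw [h]
  simp [Matrix.det_succ_row_zero, Fin.sum_univ_succ, Fin.succAbove,
    Fin.castSucc, Fin.castAdd, Fin.castLE]
  ring

lemma molien_rt : molienTerm (swap 0 1) = (((1 - X)^2 * (1 - X^2)^2 : ℚ⟦X⟧))⁻¹ := by
  unfold molienTerm
  rw [det_rt]

set_option maxHeartbeats 4000000 in
set_option maxRecDepth 40000 in
lemma det_rd : Matrix.det (1 - (X : ℚ⟦X⟧) • (edgeMat (swap 0 1 * swap 2 3)).map (C)) = (1 - X)^2 * (1 - X^2)^2 := by
  rw [det_edge _ !![1,0,0,0,0,0; 0,0,0,0,1,0; 0,0,0,1,0,0; 0,0,1,0,0,0; 0,1,0,0,0,0; 0,0,0,0,0,1] (by decide)]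
  have h : (1 - (X : ℚ⟦X⟧) • (!![1,0,0,0,0,0; 0,0,0,0,1,0; 0,0,0,1,0,0; 0,0,1,0,0,0; 0,1,0,0,0,0; 0,0,0,0,0,1] : Matrix (Fin 6) (Fin 6) ℚ).map (C)) =
      !![1-X,0,0,0,0,0; 0,1,0,0,-X,0; 0,0,1,-X,0,0; 0,0,-X,1,0,0; 0,-X,0,0,1,0; 0,0,0,0,0,1-X] := by
    refine Matrix.ext fun i j => ?_
    fin_cases i <;> fin_cases j <;>
      simp [Matrix.one_apply, Matrix.vecHead, Matrix.vecTail, cons_val_five]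
  rw [h]
  simp [Matrix.det_succ_row_zero, Fin.sum_univ_succ, Fin.succAbove,
    Fin.castSucc, Fin.castAdd, Fin.castLE]
  ring

lemma molien_rd : molienTerm (swap 0 1 * swap 2 3) = (((1 - X)^2 * (1 - X^2)^2 : ℚ⟦X⟧))⁻¹ := by
  unfold molienTerm
  rw [det_rd]

set_option maxHeartbeats 4000000 in
set_option maxRecDepth 40000 in
lemma det_rc3 : Matrix.det (1 - (X : ℚ⟦X⟧) • (edgeMat (swap 0 1 * swap 1 2)).map (C)) = (1 - X^3)^2 := by
  rw [det_edge _ !![0,1,0,0,0,0; 0,0,0,1,0,0; 0,0,0,0,0,1; 1,0,0,0,0,0; 0,0,1,0,0,0; 0,0,0,0,1,0] (by decide)]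
  have h : (1 - (X : ℚ⟦X⟧) • (!![0,1,0,0,0,0; 0,0,0,1,0,0; 0,0,0,0,0,1; 1,0,0,0,0,0; 0,0,1,0,0,0; 0,0,0,0,1,0] : Matrix (Fin 6) (Fin 6) ℚ).map (C)) =
      !![1,-X,0,0,0,0; 0,1,0,-X,0,0; 0,0,1,0,0,-X; -X,0,0,1,0,0; 0,0,-X,0,1,0; 0,0,0,0,-X,1] := by
    refine Matrix.ext fun i j => ?_
    fin_cases i <;> fin_cases j <;>
      simp [Matrix.one_apply, Matrix.vecHead, Matrix.vecTail, cons_val_five]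
  rw [h]
  simp [Matrix.det_succ_row_zero, Fin.sum_univ_succ, Fin.succAbove,
    Fin.castSucc, Fin.castAdd, Fin.castLE]
  ring

lemma molien_rc3 : molienTerm (swap 0 1 * swap 1 2) = (((1 - X^3)^2 : ℚ⟦X⟧))⁻¹ := by
  unfold molienTerm
  rw [det_rc3]

set_option maxHeartbeats 4000000 in
set_option maxRecDepth 40000 in
lemma det_rc4 : Matrix.det (1 - (X : ℚ⟦X⟧) • (edgeMat (swap 0 1 * swap 1 2 * swap 2 3)).map (C)) = (1 - X^2) * (1 - X^4) := by
  rw [det_edge _ !![0,0,1,0,0,0; 0,0,0,0,1,0; 0,0,0,0,0,1; 1,0,0,0,0,0; 0,1,0,0,0,0; 0,0,0,1,0,0] (by decide)]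
  have h : (1 - (X : ℚ⟦X⟧) • (!![0,0,1,0,0,0; 0,0,0,0,1,0; 0,0,0,0,0,1; 1,0,0,0,0,0; 0,1,0,0,0,0; 0,0,0,1,0,0] : Matrix (Fin 6) (Fin 6) ℚ).map (C)) =
      !![1,0,-X,0,0,0; 0,1,0,0,-X,0; 0,0,1,0,0,-X; -X,0,0,1,0,0; 0,-X,0,0,1,0; 0,0,0,-X,0,1] := by
    refine Matrix.ext fun i j => ?_
    fin_cases i <;> fin_cases j <;>
      simp [Matrix.one_apply, Matrix.vecHead, Matrix.vecTail, cons_val_five]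
  rw [h]
  simp [Matrix.det_succ_row_zero, Fin.sum_univ_succ, Fin.succAbove,
    Fin.castSucc, Fin.castAdd, Fin.castLE]
  ring

lemma molien_rc4 : molienTerm (swap 0 1 * swap 1 2 * swap 2 3) = (((1 - X^2) * (1 - X^4) : ℚ⟦X⟧))⁻¹ := by
  unfold molienTerm
  rw [det_rc4]

set_option maxHeartbeats 4000000 in
/-- By Molien's theorem, the generating function of the numbers of `S4`-invariants
in `Sym^k` of the 6-dimensional edge representation equals `f18`; in particular its
coefficients in degrees `0,…,7` are `1, 1, 3, 6, 11, 18, 32, 48`. -/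
theorem stmt_18 :
    (24 : PowerSeries ℚ)⁻¹ * (∑ g : Equiv.Perm (Fin 4), molienTerm g) = f18 ∧
    PowerSeries.coeff 0 f18 = 1 ∧ PowerSeries.coeff 1 f18 = 1 ∧
    PowerSeries.coeff 2 f18 = 3 ∧ PowerSeries.coeff 3 f18 = 6 ∧
    PowerSeries.coeff 4 f18 = 11 ∧ PowerSeries.coeff 5 f18 = 18 ∧
    PowerSeries.coeff 6 f18 = 32 ∧ PowerSeries.coeff 7 f18 = 48 := by
  have cQ : constantCoeff ((1 - X) ^ 6 * (1 + X) ^ 2 * (1 + X ^ 2) *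
      (1 + X + X ^ 2) ^ 2 : ℚ⟦X⟧) ≠ 0 := by simp
  have hfQ : f18 * ((1 - X) ^ 6 * (1 + X) ^ 2 * (1 + X ^ 2) * (1 + X + X ^ 2) ^ 2 : ℚ⟦X⟧) =
      (1 - X + X ^ 2 + X ^ 4 + X ^ 6 - X ^ 7 + X ^ 8 : ℚ⟦X⟧) := by
    unfold f18
    rw [mul_assoc, PowerSeries.inv_mul_cancel _ cQ, mul_one]
  constructor
  · have huniv : (Finset.univ : Finset (Equiv.Perm (Fin 4))) = {1, swap 2 3, swap 1 2, swap 1 3, swap 0 1, swap 0 2, swap 0 3, swap 0 1 * swap 2 3, swap 0 2 * swap 1 3, swap 0 3 * swap 1 2, swap 1 2 * swap 2 3, swap 1 3 * swap 3 2, swap 0 1 * swap 1 2, swap 0 1 * swap 1 3, swap 0 2 * swap 2 1, swap 0 2 * swap 2 3, swap 0 3 * swap 3 1, swap 0 3 * swap 3 2, swap 0 1 * swap 1 2 * swap 2 3, swap 0 1 * swap 1 3 * swap 3 2, swap 0 2 * swap 2 3 * swap 3 1, swap 0 2 * swap 2 1 * swap 1 3, swap 0 3 * swap 3 2 * swap 2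 1, swap 0 3 * swap 3 1 * swap 1 2} := by decide
    have m0 : molienTerm (1) = (((1 - X)^6 : ℚ⟦X⟧))⁻¹ := molien_r1
    have m1 : molienTerm (swap 2 3) = (((1 - X)^2 * (1 - X^2)^2 : ℚ⟦X⟧))⁻¹ := by
      rw [show (swap 2 3 : Equiv.Perm (Fin 4)) = (swap 0 2 * swap 1 3) * (swap 0 1) * (swap 0 2 * swap 1 3)⁻¹ by decide,
        molienTerm_conj]
      exact molien_rt
    have m2 : molienTerm (swap 1 2) = (((1 - X)^2 * (1 - X^2)^2 : ℚ⟦X⟧))⁻¹ := by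
      rw [show (swap 1 2 : Equiv.Perm (Fin 4)) = (swap 0 1 * swap 1 2) * (swap 0 1) * (swap 0 1 * swap 1 2)⁻¹ by decide,
        molienTerm_conj]
      exact molien_rt
    have m3 : molienTerm (swap 1 3) = (((1 - X)^2 * (1 - X^2)^2 : ℚ⟦X⟧))⁻¹ := by
      rw [show (swap 1 3 : Equiv.Perm (Fin 4)) = (swap 0 1 * swap 1 3 * swap 3 2) * (swap 0 1) * (swap 0 1 * swap 1 3 * swap 3 2)⁻¹ by decide,
        molienTerm_conj]
      exact molien_rt
    have m4 : molienTerm (swap 0 1) = (((1 - X)^2 * (1 - X^2)^2 : ℚ⟦X⟧))⁻¹ := molien_rt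
    have m5 : molienTerm (swap 0 2) = (((1 - X)^2 * (1 - X^2)^2 : ℚ⟦X⟧))⁻¹ := by
      rw [show (swap 0 2 : Equiv.Perm (Fin 4)) = (swap 1 2) * (swap 0 1) * (swap 1 2)⁻¹ by decide,
        molienTerm_conj]
      exact molien_rt
    have m6 : molienTerm (swap 0 3) = (((1 - X)^2 * (1 - X^2)^2 : ℚ⟦X⟧))⁻¹ := by
      rw [show (swap 0 3 : Equiv.Perm (Fin 4)) = (swap 1 3 * swap 3 2) * (swap 0 1) * (swap 1 3 * swap 3 2)⁻¹ by decide,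
        molienTerm_conj]
      exact molien_rt
    have m7 : molienTerm (swap 0 1 * swap 2 3) = (((1 - X)^2 * (1 - X^2)^2 : ℚ⟦X⟧))⁻¹ := molien_rd
    have m8 : molienTerm (swap 0 2 * swap 1 3) = (((1 - X)^2 * (1 - X^2)^2 : ℚ⟦X⟧))⁻¹ := by
      rw [show (swap 0 2 * swap 1 3 : Equiv.Perm (Fin 4)) = (swap 1 2) * (swap 0 1 * swap 2 3) * (swap 1 2)⁻¹ by decide,
        molienTerm_conj]
      exact molien_rd
    have m9 : molienTerm (swap 0 3 * swap 1 2) = (((1 - X)^2 * (1 - X^2)^2 : ℚ⟦X⟧))⁻¹ := by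
      rw [show (swap 0 3 * swap 1 2 : Equiv.Perm (Fin 4)) = (swap 1 3 * swap 3 2) * (swap 0 1 * swap 2 3) * (swap 1 3 * swap 3 2)⁻¹ by decide,
        molienTerm_conj]
      exact molien_rd
    have m10 : molienTerm (swap 1 2 * swap 2 3) = (((1 - X^3)^2 : ℚ⟦X⟧))⁻¹ := by
      rw [show (swap 1 2 * swap 2 3 : Equiv.Perm (Fin 4)) = (swap 0 1 * swap 1 2 * swap 2 3) * (swap 0 1 * swap 1 2) * (swap 0 1 * swap 1 2 * swap 2 3)⁻¹ by decide,
        molienTerm_conj]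
      exact molien_rc3
    have m11 : molienTerm (swap 1 3 * swap 3 2) = (((1 - X^3)^2 : ℚ⟦X⟧))⁻¹ := by
      rw [show (swap 1 3 * swap 3 2 : Equiv.Perm (Fin 4)) = (swap 0 1 * swap 1 3) * (swap 0 1 * swap 1 2) * (swap 0 1 * swap 1 3)⁻¹ by decide,
        molienTerm_conj]
      exact molien_rc3
    have m12 : molienTerm (swap 0 1 * swap 1 2) = (((1 - X^3)^2 : ℚ⟦X⟧))⁻¹ := molien_rc3
    have m13 : molienTerm (swap 0 1 * swap 1 3) = (((1 - X^3)^2 : ℚ⟦X⟧))⁻¹ := by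
      rw [show (swap 0 1 * swap 1 3 : Equiv.Perm (Fin 4)) = (swap 2 3) * (swap 0 1 * swap 1 2) * (swap 2 3)⁻¹ by decide,
        molienTerm_conj]
      exact molien_rc3
    have m14 : molienTerm (swap 0 2 * swap 2 1) = (((1 - X^3)^2 : ℚ⟦X⟧))⁻¹ := by
      rw [show (swap 0 2 * swap 2 1 : Equiv.Perm (Fin 4)) = (swap 1 2) * (swap 0 1 * swap 1 2) * (swap 1 2)⁻¹ by decide,
        molienTerm_conj]
      exact molien_rc3
    have m15 : molienTerm (swap 0 2 * swap 2 3) = (((1 - X^3)^2 : ℚ⟦X⟧))⁻¹ := by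
      rw [show (swap 0 2 * swap 2 3 : Equiv.Perm (Fin 4)) = (swap 1 2 * swap 2 3) * (swap 0 1 * swap 1 2) * (swap 1 2 * swap 2 3)⁻¹ by decide,
        molienTerm_conj]
      exact molien_rc3
    have m16 : molienTerm (swap 0 3 * swap 3 1) = (((1 - X^3)^2 : ℚ⟦X⟧))⁻¹ := by
      rw [show (swap 0 3 * swap 3 1 : Equiv.Perm (Fin 4)) = (swap 1 3 * swap 3 2) * (swap 0 1 * swap 1 2) * (swap 1 3 * swap 3 2)⁻¹ by decide,
        molienTerm_conj]
      exact molien_rc3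
    have m17 : molienTerm (swap 0 3 * swap 3 2) = (((1 - X^3)^2 : ℚ⟦X⟧))⁻¹ := by
      rw [show (swap 0 3 * swap 3 2 : Equiv.Perm (Fin 4)) = (swap 1 3) * (swap 0 1 * swap 1 2) * (swap 1 3)⁻¹ by decide,
        molienTerm_conj]
      exact molien_rc3
    have m18 : molienTerm (swap 0 1 * swap 1 2 * swap 2 3) = (((1 - X^2) * (1 - X^4) : ℚ⟦X⟧))⁻¹ := molien_rc4
    have m19 : molienTerm (swap 0 1 * swap 1 3 * swap 3 2) = (((1 - X^2) * (1 - X^4) : ℚ⟦X⟧))⁻¹ := by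
      rw [show (swap 0 1 * swap 1 3 * swap 3 2 : Equiv.Perm (Fin 4)) = (swap 2 3) * (swap 0 1 * swap 1 2 * swap 2 3) * (swap 2 3)⁻¹ by decide,
        molienTerm_conj]
      exact molien_rc4
    have m20 : molienTerm (swap 0 2 * swap 2 3 * swap 3 1) = (((1 - X^2) * (1 - X^4) : ℚ⟦X⟧))⁻¹ := by
      rw [show (swap 0 2 * swap 2 3 * swap 3 1 : Equiv.Perm (Fin 4)) = (swap 1 2 * swap 2 3) * (swap 0 1 * swap 1 2 * swap 2 3) * (swap 1 2 * swap 2 3)⁻¹ by decide,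
        molienTerm_conj]
      exact molien_rc4
    have m21 : molienTerm (swap 0 2 * swap 2 1 * swap 1 3) = (((1 - X^2) * (1 - X^4) : ℚ⟦X⟧))⁻¹ := by
      rw [show (swap 0 2 * swap 2 1 * swap 1 3 : Equiv.Perm (Fin 4)) = (swap 1 2) * (swap 0 1 * swap 1 2 * swap 2 3) * (swap 1 2)⁻¹ by decide,
        molienTerm_conj]
      exact molien_rc4
    have m22 : molienTerm (swap 0 3 * swap 3 2 * swap 2 1) = (((1 - X^2) * (1 - X^4) : ℚ⟦X⟧))⁻¹ := by
      rw [show (swap 0 3 * swap 3 2 * swap 2 1 : Equiv.Perm (Fin 4)) = (swap 1 3) * (swap 0 1 * swap 1 2 * swap 2 3) * (swap 1 3)⁻¹ by decide,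
        molienTerm_conj]
      exact molien_rc4
    have m23 : molienTerm (swap 0 3 * swap 3 1 * swap 1 2) = (((1 - X^2) * (1 - X^4) : ℚ⟦X⟧))⁻¹ := by
      rw [show (swap 0 3 * swap 3 1 * swap 1 2 : Equiv.Perm (Fin 4)) = (swap 1 3 * swap 3 2) * (swap 0 1 * swap 1 2 * swap 2 3) * (swap 1 3 * swap 3 2)⁻¹ by decide,
        molienTerm_conj]
      exact molien_rc4
    rw [huniv]
    rw [Finset.sum_insert (by decide), Finset.sum_insert (by decide), Finset.sum_insert (by decide), Finset.sum_insert (by decide), Finset.sum_insert (by decide), Finset.sum_insert (by decide), Finset.sum_insert (by decide), Finset.sum_insert (by decide), Finset.sum_insert (by decide), Finset.sum_insert (by decide), Finset.sum_insert (by decide), Finset.sum_insert (by decide), Finset.sum_insert (by decide), Finset.sum_insert (by decide), Finset.sum_insert (by decide), Finset.sum_insert (by decide), Finset.sum_insert (by decide), Finset.sum_insert (by decide), Finset.sum_insert (by decide), Finset.sum_insert (by decide), Finset.sum_insert (by decide), Finset.sum_insert (by decide), Finset.sum_insert (by decide),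
      Finset.sum_singleton]
    rw [m0, m1, m2, m3, m4, m5, m6, m7, m8, m9, m10, m11, m12, m13, m14, m15, m16, m17, m18, m19, m20, m21, m22, m23]
    have hQne : ((1 - X) ^ 6 * (1 + X) ^ 2 * (1 + X ^ 2) * (1 + X + X ^ 2) ^ 2 : ℚ⟦X⟧) ≠ 0 :=
      fun hq => cQ (by rw [hq]; simp)
    have c1 : constantCoeff ((1 - X)^6 : ℚ⟦X⟧) ≠ 0 := by simp
    have ct : constantCoeff ((1 - X)^2 * (1 - X^2)^2 : ℚ⟦X⟧) ≠ 0 := by simp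
    have c3 : constantCoeff ((1 - X^3)^2 : ℚ⟦X⟧) ≠ 0 := by simp
    have c4 : constantCoeff ((1 - X^2) * (1 - X^4) : ℚ⟦X⟧) ≠ 0 := by simp
    have h1Q : ((1 - X)^6 : ℚ⟦X⟧)⁻¹ * ((1 - X) ^ 6 * (1 + X) ^ 2 * (1 + X ^ 2)
        * (1 + X + X ^ 2) ^ 2) = (1 + X)^2 * (1 + X^2) * (1 + X + X^2)^2 := by
      rw [show ((1 - X) ^ 6 * (1 + X) ^ 2 * (1 + X ^ 2) * (1 + X + X ^ 2) ^ 2 : ℚ⟦X⟧) =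
        (1 - X)^6 * ((1 + X)^2 * (1 + X^2) * (1 + X + X^2)^2) by ring,
        ← mul_assoc, PowerSeries.inv_mul_cancel _ c1, one_mul]
    have htQ : ((1 - X)^2 * (1 - X^2)^2 : ℚ⟦X⟧)⁻¹ * ((1 - X) ^ 6 * (1 + X) ^ 2 * (1 + X ^ 2)
        * (1 + X + X ^ 2) ^ 2) = (1 - X)^2 * (1 + X^2) * (1 + X + X^2)^2 := by
      rw [show ((1 - X) ^ 6 * (1 + X) ^ 2 * (1 + X ^ 2) * (1 + X + X ^ 2) ^ 2 : ℚ⟦X⟧) =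
        ((1 - X)^2 * (1 - X^2)^2) * ((1 - X)^2 * (1 + X^2) * (1 + X + X^2)^2) by ring,
        ← mul_assoc, PowerSeries.inv_mul_cancel _ ct, one_mul]
    have h3Q : ((1 - X^3)^2 : ℚ⟦X⟧)⁻¹ * ((1 - X) ^ 6 * (1 + X) ^ 2 * (1 + X ^ 2)
        * (1 + X + X ^ 2) ^ 2) = (1 - X)^4 * (1 + X)^2 * (1 + X^2) := by
      rw [show ((1 - X) ^ 6 * (1 + X) ^ 2 * (1 + X ^ 2) * (1 + X + X ^ 2) ^ 2 : ℚ⟦X⟧) =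
        ((1 - X^3)^2) * ((1 - X)^4 * (1 + X)^2 * (1 + X^2)) by ring,
        ← mul_assoc, PowerSeries.inv_mul_cancel _ c3, one_mul]
    have h4Q : ((1 - X^2) * (1 - X^4) : ℚ⟦X⟧)⁻¹ * ((1 - X) ^ 6 * (1 + X) ^ 2 * (1 + X ^ 2)
        * (1 + X + X ^ 2) ^ 2) = (1 - X)^4 * (1 + X + X^2)^2 := by
      rw [show ((1 - X) ^ 6 * (1 + X) ^ 2 * (1 + X ^ 2) * (1 + X + X ^ 2) ^ 2 : ℚ⟦X⟧) =
        ((1 - X^2) * (1 - X^4)) * ((1 - X)^4 * (1 + X + X^2)^2) by ring,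
        ← mul_assoc, PowerSeries.inv_mul_cancel _ c4, one_mul]
    have h24 : (24 : ℚ⟦X⟧)⁻¹ * 24 = 1 :=
      PowerSeries.inv_mul_cancel _ (by rw [map_ofNat]; norm_num)
    apply mul_right_cancel₀ hQne
    rw [hfQ, mul_assoc]
    simp only [add_mul, h1Q, htQ, h3Q, h4Q]
    linear_combination (1 - X + X ^ 2 + X ^ 4 + X ^ 6 - X ^ 7 + X ^ 8 : ℚ⟦X⟧) * h24
  · set F7 : ℚ⟦X⟧ := 1 + X + C 3 * X^2 + C 6 * X^3 + C 11 * X^4 + C 18 * X^5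
        + C 32 * X^6 + C 48 * X^7 with hF7
    have key : (f18 - F7) * ((1 - X) ^ 6 * (1 + X) ^ 2 * (1 + X ^ 2)
        * (1 + X + X ^ 2) ^ 2 : ℚ⟦X⟧)
        = X^8 * (C 75 * 1 - C 39 * X - C 62 * X^2 - C 96 * X^3 + C 15 * X^4
          + C 166 * X^5 + C 39 * X^6 + C 49 * X^7 - C 151 * X^8 - C 80 * X^9
          + C 25 * X^10 + C 46 * X^11 + C 64 * X^12 - C 48 * X^13) := by
      rw [sub_mul, hfQ, hF7]
      simp only [map_ofNat]
      ring
    have hdvd : (X:ℚ⟦X⟧)^8 ∣ f18 - F7 := by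
      refine ⟨(C 75 * 1 - C 39 * X - C 62 * X^2 - C 96 * X^3 + C 15 * X^4
          + C 166 * X^5 + C 39 * X^6 + C 49 * X^7 - C 151 * X^8 - C 80 * X^9
          + C 25 * X^10 + C 46 * X^11 + C 64 * X^12 - C 48 * X^13) *
          ((1 - X) ^ 6 * (1 + X) ^ 2 * (1 + X ^ 2) * (1 + X + X ^ 2) ^ 2 : ℚ⟦X⟧)⁻¹, ?_⟩
      rw [← mul_assoc, PowerSeries.eq_mul_inv_iff_mul_eq cQ]
      exact key
    have hlow : ∀ m, m < 8 → coeff m (f18 - F7) = 0 := fun m hm =>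
      PowerSeries.X_pow_dvd_iff.mp hdvd m hm
    have hco : ∀ m, m < 8 → coeff m f18 = coeff m F7 := by
      intro m hm
      have h := hlow m hm
      rwa [map_sub, sub_eq_zero] at h
    refine ⟨?_, ?_, ?_, ?_, ?_, ?_, ?_, ?_⟩ <;>
      rw [hco _ (by norm_num), hF7] <;>
      simp [PowerSeries.coeff_X, PowerSeries.coeff_X_pow, PowerSeries.coeff_one]

end
end
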